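/- Let G be an infinite, locally finite graph, let U : E → [0,1] be injective, and let A ⊆ E be a finite set of edges. Define Ũ(e) := 1 for e ∈ A and Ũ(e) := U(e) for e ∉ A. Then A ∩ F_f(U) = ∅ if and only if U(e) > Z_f^{Ũ}(e) for every e ∈ A, where Z_f^{Ũ}(e) := inf over simple paths P in G \ {e} connecting the endpoints of e of max{Ũ(e') : e' ∈ P} (and := +∞ if no such path exists). Moreover, if A ∩ F_f(U) = ∅, then Z_f^{U}(e) = Z_f^{Ũ}(e) for every e ∈ A and F_f(U) = F_f(Ũ). -/
import Mathlib


open SimpleGraph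

/-- The set of edges of `G` whose endpoints cannot be joined by a path all of whose
edges have strictly smaller label: the (free) minimal spanning forest / tree of `G`. -/
def mstEdges {V α : Type*} [LinearOrder α] (G : SimpleGraph V) (U : Sym2 V → α) :
    Set (Sym2 V) :=
  {e | e ∈ G.edgeSet ∧ ∀ a b : V, e = s(a, b) →
    ∀ p : G.Walk a b, p.IsPath → ∃ f ∈ p.edges, U e ≤ U f}

/-- A one-sided infinite simple path in `G`. -/
def IsRay {V : Type*} (G : SimpleGraph V) (r : ℕ → V) : Prop :=
  Function.Injective r ∧ ∀ n : ℕ, G.Adj (r n) (r (n + 1))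

/-- The edges of a one-sided infinite path. -/
def rayEdges {V : Type*} (r : ℕ → V) : Set (Sym2 V) :=
  Set.range fun n : ℕ => s(r n, r (n + 1))

/-- The wired minimal spanning forest of `G`: edges such that every extended path
(finite simple path, or pair of disjoint rays from the two endpoints) joining the
endpoints contains an edge of label at least as large. -/
def wmsfEdges {V : Type*} (G : SimpleGraph V) (U : Sym2 V → ℝ) : Set (Sym2 V) :=
  {e | e ∈ G.edgeSet ∧ ∀ a b : V, e = s(a, b) →
    (∀ p : G.Walk a b, p.IsPath → ∃ f ∈ p.edges, U e ≤ U f) ∧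
    (∀ r₁ r₂ : ℕ → V, IsRay G r₁ → IsRay G r₂ → r₁ 0 = a → r₂ 0 = b →
      (∀ m n : ℕ, r₁ m ≠ r₂ n) →
      ∃ f ∈ rayEdges r₁ ∪ rayEdges r₂, U e ≤ U f)}

/-- The edges of `G` joining `W` to its complement. -/
def cutEdges {V : Type*} (G : SimpleGraph V) (W : Set V) : Set (Sym2 V) :=
  {e | e ∈ G.edgeSet ∧ ∃ a b : V, e = s(a, b) ∧ a ∈ W ∧ b ∉ W}

/-- A bi-infinite simple path in `G`. -/
def IsBiRay {V : Type*} (G : SimpleGraph V) (r : ℤ → V) : Prop :=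
  Function.Injective r ∧ ∀ n : ℤ, G.Adj (r n) (r (n + 1))

/-- The edges of a bi-infinite simple path. -/
def biRayEdges {V : Type*} (r : ℤ → V) : Set (Sym2 V) :=
  Set.range fun n : ℤ => s(r n, r (n + 1))

/-- The maximum label along a list of edges, as an extended real. -/
noncomputable def listMaxE {V : Type*} (U : Sym2 V → ℝ) (L : List (Sym2 V)) : EReal :=
  sSup {y : EReal | ∃ f ∈ L, y = (U f : EReal)}

/-- `Z_f^W(e)` for a labeling `W`: the infimum over simple paths in `G \ {e}`
connecting the endpoints of `e` of the maximum label along the path, `+∞`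
(`= sInf ∅` in `EReal`) if there is no such path. -/
noncomputable def ZfE {V : Type*} (G : SimpleGraph V) (W : Sym2 V → ℝ) (e : Sym2 V) :
    EReal :=
  sInf {x : EReal | ∃ (a b : V) (p : G.Walk a b), e = s(a, b) ∧ p.IsPath ∧
    e ∉ p.edges ∧ x = listMaxE W p.edges}


section Stmt18Helpers

variable {V : Type*}

lemma listMaxE_nil (U : Sym2 V → ℝ) : listMaxE U [] = ⊥ := by
  simp [listMaxE]

lemma listMaxE_cons (U : Sym2 V → ℝ) (f : Sym2 V) (L : List (Sym2 V)) :
    listMaxE U (f :: L) = max (U f : EReal) (listMaxE U L) := by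
  unfold listMaxE
  rw [show {y : EReal | ∃ g ∈ f :: L, y = (U g : EReal)}
      = insert ((U f : ℝ) : EReal) {y | ∃ g ∈ L, y = (U g : EReal)} by
    ext y; simp [List.mem_cons, or_and_right, exists_or]]
  rw [sSup_insert]

lemma le_listMaxE (U : Sym2 V → ℝ) {f : Sym2 V} {L : List (Sym2 V)}
    (hf : f ∈ L) : ((U f : ℝ) : EReal) ≤ listMaxE U L := by
  induction L with
  | nil => simp at hf
  | cons g L ih =>
    rw [listMaxE_cons]
    rcases List.mem_cons.1 hf with h | h
    · subst h; exact le_max_left _ _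
    · exact le_trans (ih h) (le_max_right _ _)

lemma listMaxE_lt (U : Sym2 V → ℝ) {L : List (Sym2 V)} {c : EReal}
    (hc : ⊥ < c) (h : ∀ f ∈ L, ((U f : ℝ) : EReal) < c) : listMaxE U L < c := by
  induction L with
  | nil => rw [listMaxE_nil]; exact hc
  | cons g L ih =>
    rw [listMaxE_cons]
    exact max_lt (h g (by simp)) (ih fun f hf => h f (by simp [hf]))

lemma listMaxE_congr {U W : Sym2 V → ℝ} {L : List (Sym2 V)}
    (h : ∀ f ∈ L, U f = W f) : listMaxE U L = listMaxE W L := by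
  induction L with
  | nil => rw [listMaxE_nil, listMaxE_nil]
  | cons g L ih =>
    rw [listMaxE_cons, listMaxE_cons, h g (by simp), ih fun f hf => h f (by simp [hf])]

lemma listMaxE_mono {U W : Sym2 V → ℝ} {L : List (Sym2 V)}
    (h : ∀ f ∈ L, U f ≤ W f) : listMaxE U L ≤ listMaxE W L := by
  induction L with
  | nil => simp [listMaxE_nil]
  | cons g L ih =>
    rw [listMaxE_cons, listMaxE_cons]
    exact max_le_max (by exact_mod_cast h g (by simp)) (ih fun f hf => h f (by simp [hf]))

lemma listMaxE_attained (U : Sym2 V → ℝ) {L : List (Sym2 V)} (h : L ≠ []) :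
    ∃ f ∈ L, listMaxE U L = ((U f : ℝ) : EReal) := by
  induction L with
  | nil => exact absurd rfl h
  | cons g L ih =>
    rcases eq_or_ne L [] with rfl | hL
    · exact ⟨g, by simp, by rw [listMaxE_cons, listMaxE_nil]; simp⟩
    · obtain ⟨f, hf, hfe⟩ := ih hL
      rw [listMaxE_cons, hfe]
      rcases le_total ((U g : ℝ) : EReal) ((U f : ℝ) : EReal) with h' | h'
      · exact ⟨f, by simp [hf], max_eq_right h'⟩
      · exact ⟨g, by simp, max_eq_left h'⟩

lemma ereal_le_coe_of_forall {a : EReal} {r : ℝ} (h : ∀ c : ℝ, r < c → a ≤ (c : EReal)) :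
    a ≤ (r : EReal) := by
  by_contra h'
  push_neg at h'
  induction a with
  | bot => exact absurd h' (by simp)
  | coe s =>
    have hrs : r < s := by exact_mod_cast h'
    have := h ((r + s) / 2) (by linarith)
    rw [EReal.coe_le_coe_iff] at this
    linarith
  | top =>
    exact (EReal.coe_ne_top (r + 1)) (top_le_iff.1 (h (r + 1) (by linarith)))

lemma walk_edges_ne_nil {G : SimpleGraph V} {a b : V} (hab : a ≠ b)
    (p : G.Walk a b) : p.edges ≠ [] := by
  cases p with
  | nil => exact absurd rfl hab
  | cons h p => simp

lemma stmt18_splice [DecidableEq V] (G : SimpleGraph V) (U : Sym2 V → ℝ)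
    (A : Finset (Sym2 V))
    (H : ∀ f ∈ A, ∃ (a b : V) (p : G.Walk a b), f = s(a, b) ∧ ∀ g ∈ p.edges, U g < U f) :
    ∀ (n : ℕ) (c : ℝ), (A.filter (fun g => U g < c)).card ≤ n →
      ∀ (a b : V) (p : G.Walk a b), (∀ g ∈ p.edges, U g < c) →
      ∃ q : G.Walk a b, ∀ g ∈ q.edges, g ∉ A ∧ U g < c := by
  intro n
  induction n with
  | zero =>
    intro c hc a b p hp
    refine ⟨p, fun g hg => ⟨?_, hp g hg⟩⟩
    intro hgA
    have hmem : g ∈ A.filter (fun g => U g < c) := Finset.mem_filter.2 ⟨hgA, hp g hg⟩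
    have := Finset.card_pos.2 ⟨g, hmem⟩
    omega
  | succ n ih =>
    intro c hc a b p
    induction p with
    | nil => exact fun _ => ⟨.nil, by simp⟩
    | @cons a x b hadj p' ihp =>
      intro hp
      obtain ⟨q', hq'⟩ := ihp (fun g hg => hp g (by simp [hg]))
      by_cases hA0 : s(a, x) ∈ A
      · have hUf : U s(a, x) < c := hp _ (by simp)
        have hcard : (A.filter (fun g => U g < U s(a, x))).card ≤ n := by
          have hsub : A.filter (fun g => U g < U s(a, x)) ⊆
              (A.filter (fun g => U g < c)).erase s(a, x) := by
            intro g hg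
            obtain ⟨hg1, hg2⟩ := Finset.mem_filter.1 hg
            rw [Finset.mem_erase]
            exact ⟨by rintro rfl; exact lt_irrefl _ hg2,
              Finset.mem_filter.2 ⟨hg1, hg2.trans hUf⟩⟩
          have h1 := Finset.card_le_card hsub
          have h2 := Finset.card_erase_of_mem (s := A.filter (fun g => U g < c))
            (by rw [Finset.mem_filter]; exact ⟨hA0, hUf⟩)
          omega
        obtain ⟨a', b', r, hfr, hr⟩ := H _ hA0
        rcases Sym2.eq_iff.1 hfr with ⟨h1, h2⟩ | ⟨h1, h2⟩
        · subst h1; subst h2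
          obtain ⟨r', hr'⟩ := ih (U s(a, x)) hcard a x r hr
          refine ⟨r'.append q', fun g hg => ?_⟩
          rw [Walk.edges_append, List.mem_append] at hg
          rcases hg with hg | hg
          · exact ⟨(hr' g hg).1, (hr' g hg).2.trans hUf⟩
          · exact hq' g hg
        · subst h1; subst h2
          obtain ⟨r', hr'⟩ := ih (U s(a, x)) hcard a x r.reverse
            (fun g hg => hr g (by rwa [Walk.edges_reverse, List.mem_reverse] at hg))
          refine ⟨r'.append q', fun g hg => ?_⟩
          rw [Walk.edges_append, List.mem_append] at hg
          rcases hg with hg | hg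
          · exact ⟨(hr' g hg).1, (hr' g hg).2.trans hUf⟩
          · exact hq' g hg
      · refine ⟨.cons hadj q', fun g hg => ?_⟩
        rcases List.mem_cons.1 (by simpa using hg) with h | h
        · subst h; exact ⟨hA0, hp _ (by simp)⟩
        · exact hq' g h

lemma stmt18_good_path [DecidableEq V] (G : SimpleGraph V) (U : Sym2 V → ℝ)
    (A : Finset (Sym2 V))
    (H : ∀ f ∈ A, ∃ (a b : V) (p : G.Walk a b), f = s(a, b) ∧ ∀ g ∈ p.edges, U g < U f)
    (c : ℝ) (a b : V) (p : G.Walk a b) (hp : ∀ g ∈ p.edges, U g < c) :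
    ∃ q : G.Walk a b, q.IsPath ∧ ∀ g ∈ q.edges, g ∉ A ∧ U g < c := by
  obtain ⟨q, hq⟩ := stmt18_splice G U A H _ c le_rfl a b p hp
  exact ⟨q.bypass, q.bypass_isPath, fun g hg => hq g (q.edges_bypass_subset hg)⟩

end Stmt18Helpers

/-- Let `A` be a finite set of edges of an infinite locally finite
graph `G` with injective labels `U : E → [0,1]`, and let `Ũ` be `1` on `A` and
`U` elsewhere. Then `A` is disjoint from the free minimal spanning forest of `U`
iff `U(e) > Z_f^{Ũ}(e)` for every `e ∈ A`; and in that case `Z_f^U = Z_f^{Ũ}`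
on `A` and `F_f(U) = F_f(Ũ)`. -/
theorem stmt18 {V : Type*} [Infinite V] [DecidableEq V] (G : SimpleGraph V)
    (hlf : ∀ v : V, (G.neighborSet v).Finite)
    (U : Sym2 V → ℝ) (hU : Set.InjOn U G.edgeSet)
    (hU01 : ∀ e ∈ G.edgeSet, U e ∈ Set.Icc (0 : ℝ) 1)
    (A : Finset (Sym2 V)) (hA : ↑A ⊆ G.edgeSet) :
    ((↑A ∩ mstEdges G U = (∅ : Set (Sym2 V))) ↔
      ∀ e ∈ A, ZfE G (fun f => if f ∈ A then 1 else U f) e < ((U e : ℝ) : EReal)) ∧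
    (↑A ∩ mstEdges G U = (∅ : Set (Sym2 V)) →
      (∀ e ∈ A, ZfE G U e = ZfE G (fun f => if f ∈ A then 1 else U f) e) ∧
      mstEdges G U = mstEdges G (fun f => if f ∈ A then 1 else U f)) := by
  classical
  set W : Sym2 V → ℝ := fun f => if f ∈ A then 1 else U f with hWdef
  have hWin : ∀ g ∈ A, W g = 1 := fun g hg => by simp [hWdef, hg]
  have hWout : ∀ g, g ∉ A → W g = U g := fun g hg => by simp [hWdef, hg]
  have hUle : ∀ g ∈ G.edgeSet, U g ≤ W g := by
    intro g hg
    by_cases h : g ∈ A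
    · rw [hWin g h]; exact (hU01 g hg).2
    · rw [hWout g h]
  -- from disjointness, every edge of A fails the MST condition
  have hH : ↑A ∩ mstEdges G U = (∅ : Set (Sym2 V)) →
      ∀ f ∈ A, ∃ (a b : V) (p : G.Walk a b),
        f = s(a, b) ∧ p.IsPath ∧ ∀ g ∈ p.edges, U g < U f := by
    intro hd f hf
    have hfe : f ∈ G.edgeSet := hA (Finset.mem_coe.2 hf)
    have hnot : f ∉ mstEdges G U := fun hm =>
      (Set.eq_empty_iff_forall_notMem.1 hd f) ⟨Finset.mem_coe.2 hf, hm⟩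
    have hnot2 : ¬ (∀ a b : V, f = s(a, b) → ∀ p : G.Walk a b, p.IsPath →
        ∃ g ∈ p.edges, U f ≤ U g) := fun h => hnot ⟨hfe, h⟩
    push_neg at hnot2
    obtain ⟨a, b, hab, p, hpath, hp⟩ := hnot2
    exact ⟨a, b, p, hab, hpath, hp⟩
  have hH' : ↑A ∩ mstEdges G U = (∅ : Set (Sym2 V)) →
      ∀ f ∈ A, ∃ (a b : V) (p : G.Walk a b),
        f = s(a, b) ∧ ∀ g ∈ p.edges, U g < U f := by
    intro hd f hf
    obtain ⟨a, b, p, hab, _, hp⟩ := hH hd f hf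
    exact ⟨a, b, p, hab, hp⟩
  constructor
  · constructor
    · -- disjoint → Z_f^W(e) < U e on A
      intro hd e he
      have heE : e ∈ G.edgeSet := hA (Finset.mem_coe.2 he)
      obtain ⟨a, b, p, hab, hp⟩ := hH' hd e he
      obtain ⟨q, hqp, hq⟩ := stmt18_good_path G U A (hH' hd) (U e) a b p hp
      have heq : e ∉ q.edges := fun h => (hq e h).1 he
      have hlt : listMaxE W q.edges < ((U e : ℝ) : EReal) := by
        refine listMaxE_lt _ (EReal.bot_lt_coe _) fun g hg => ?_
        rw [hWout g (hq g hg).1]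
        exact_mod_cast (hq g hg).2
      have hle : ZfE G W e ≤ listMaxE W q.edges :=
        sInf_le ⟨a, b, q, hab, hqp, heq, rfl⟩
      exact lt_of_le_of_lt hle hlt
    · -- converse
      intro hz
      rw [Set.eq_empty_iff_forall_notMem]
      rintro e ⟨heA, heM⟩
      have heA' : e ∈ A := Finset.mem_coe.1 heA
      have hzlt : sInf {x : EReal | ∃ (a b : V) (p : G.Walk a b), e = s(a, b) ∧ p.IsPath ∧
          e ∉ p.edges ∧ x = listMaxE W p.edges} < ((U e : ℝ) : EReal) := hz e heA'
      obtain ⟨x, hxmem, hx⟩ := sInf_lt_iff.1 hzlt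
      obtain ⟨a, b, p, hab, hpath, hep, rfl⟩ := hxmem
      obtain ⟨g, hg, hge⟩ := heM.2 a b hab p hpath
      have hWg : ((W g : ℝ) : EReal) ≤ listMaxE W p.edges := le_listMaxE W hg
      have hWg' : W g < U e := by exact_mod_cast lt_of_le_of_lt hWg hx
      have hgA : g ∉ A := by
        intro h
        rw [hWin g h] at hWg'
        have := (hU01 e heM.1).2
        linarith
      rw [hWout g hgA] at hWg'
      linarith
  · intro hd
    have hnmU : ∀ f ∈ A, f ∉ mstEdges G U := fun f hf hm =>
      (Set.eq_empty_iff_forall_notMem.1 hd f) ⟨Finset.mem_coe.2 hf, hm⟩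
    constructor
    · -- Z_f^U = Z_f^W on A
      intro e he
      have heE : e ∈ G.edgeSet := hA (Finset.mem_coe.2 he)
      refine le_antisymm ?_ ?_
      · -- Z^U ≤ Z^W
        refine le_sInf ?_
        rintro x ⟨a, b, p, hab, hpath, hep, rfl⟩
        have h1 : ZfE G U e ≤ listMaxE U p.edges :=
          sInf_le ⟨a, b, p, hab, hpath, hep, rfl⟩
        exact h1.trans (listMaxE_mono fun g hg => hUle g (p.edges_subset_edgeSet hg))
      · -- Z^W ≤ Z^U
        refine le_sInf ?_
        rintro x ⟨a, b, p, hab, hpath, hep, rfl⟩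
        have hab' : a ≠ b := by
          have : G.Adj a b := G.mem_edgeSet.1 (hab ▸ heE)
          exact this.ne
        obtain ⟨g0, hg0, hg0e⟩ := listMaxE_attained U (walk_edges_ne_nil hab' p)
        rw [hg0e]
        refine ereal_le_coe_of_forall fun c hc => ?_
        have hp : ∀ g ∈ p.edges, U g < c := by
          intro g hg
          have : ((U g : ℝ) : EReal) ≤ ((U g0 : ℝ) : EReal) := hg0e ▸ le_listMaxE U hg
          have : U g ≤ U g0 := by exact_mod_cast this
          linarith
        obtain ⟨q, hqp, hq⟩ := stmt18_good_path G U A (hH' hd) c a b p hp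
        have heq : e ∉ q.edges := fun h => (hq e h).1 he
        have h1 : ZfE G W e ≤ listMaxE W q.edges :=
          sInf_le ⟨a, b, q, hab, hqp, heq, rfl⟩
        have h2 : listMaxE W q.edges = listMaxE U q.edges :=
          listMaxE_congr fun g hg => hWout g (hq g hg).1
        have h3 : listMaxE U q.edges < ((c : ℝ) : EReal) :=
          listMaxE_lt _ (EReal.bot_lt_coe _) fun g hg => by exact_mod_cast (hq g hg).2
        exact h1.trans (le_of_lt (h2 ▸ h3))
    · -- the two minimal spanning forests coincide
      ext e
      constructor
      · rintro ⟨heE, hm⟩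
        have heA : e ∉ A := fun h => hnmU e h ⟨heE, hm⟩
        refine ⟨heE, fun a b hab p hpath => ?_⟩
        obtain ⟨g, hg, hge⟩ := hm a b hab p hpath
        refine ⟨g, hg, ?_⟩
        rw [hWout e heA]
        by_cases hgA : g ∈ A
        · rw [hWin g hgA]
          exact (hU01 e heE).2
        · rw [hWout g hgA]; exact hge
      · rintro ⟨heE, hm⟩
        by_cases heA : e ∈ A
        · exfalso
          obtain ⟨a, b, p, hab, hp⟩ := hH' hd e heA
          obtain ⟨q, hqp, hq⟩ := stmt18_good_path G U A (hH' hd) (U e) a b p hp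
          obtain ⟨g, hg, hge⟩ := hm a b hab q hqp
          rw [hWin e heA, hWout g (hq g hg).1] at hge
          have h1 : U g < U e := (hq g hg).2
          have h2 : U e ≤ 1 := (hU01 e heE).2
          linarith
        · refine ⟨heE, ?_⟩
          by_contra hmU
          have hnot2 : ¬ (∀ a b : V, e = s(a, b) → ∀ p : G.Walk a b, p.IsPath →
              ∃ g ∈ p.edges, U e ≤ U g) := hmU
          push_neg at hnot2
          obtain ⟨a, b, hab, p, hpath, hp⟩ := hnot2
          obtain ⟨q, hqp, hq⟩ := stmt18_good_path G U A (hH' hd) (U e) a b p hp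
          obtain ⟨g, hg, hge⟩ := hm a b hab q hqp
          rw [hWout e heA, hWout g (hq g hg).1] at hge
          exact absurd hge (not_le.2 (hq g hg).2)
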